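/- Let $d\geq 3$, $m\geq 2$, $\varepsilon,\lambda_0>0$, $\alpha = \frac{-(d+m-3)+\sqrt{(d+m-3)^2+4(d-2)}}{2}$, and let $L g(r) = g''(r) + (\frac{d-2}{r} + \frac{m\lambda_0 r^{m-1}}{\varepsilon+\lambda_0 r^m}) g'(r) - \frac{d-2}{r^2} g(r)$. Then $L(r^\alpha) < 0$ for all $r \in (0,1)$, i.e., $r^\alpha$ is a strict supersolution. -/

import Mathlib

theorem stmt_14 (d : ℕ) (hd : 3 ≤ d) (m : ℝ) (hm : 2 ≤ m) (ε lam : ℝ)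
    (hε : 0 < ε) (hlam : 0 < lam) (α : ℝ)
    (hα : α = (-((d : ℝ) + m - 3) + Real.sqrt (((d : ℝ) + m - 3) ^ 2 + 4 * ((d : ℝ) - 2))) / 2) :
    ∀ r ∈ Set.Ioo (0 : ℝ) 1,
      deriv (deriv (fun s : ℝ => s ^ α)) r
        + (((d : ℝ) - 2) / r + m * lam * r ^ (m - 1) / (ε + lam * r ^ m))
          * deriv (fun s : ℝ => s ^ α) r
        - ((d : ℝ) - 2) / r ^ 2 * r ^ α < 0 := by
  intro r hr
  obtain ⟨hr0, hr1⟩ := hr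
  have hd3 : (3 : ℝ) ≤ (d : ℝ) := by exact_mod_cast hd
  set b : ℝ := (d : ℝ) + m - 3 with hb
  set c : ℝ := (d : ℝ) - 2 with hc
  have hbpos : 0 < b := by simp only [hb]; linarith
  have hcpos : (1 : ℝ) ≤ c := by simp only [hc]; linarith
  have hnn : 0 ≤ b ^ 2 + 4 * c := by nlinarith [sq_nonneg b]
  have hs : Real.sqrt (b ^ 2 + 4 * c) = 2 * α + b := by
    rw [hα]; ring
  have hs2 : (2 * α + b) ^ 2 = b ^ 2 + 4 * c := by
    rw [← hs]; exact Real.sq_sqrt hnn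
  have hq : α ^ 2 + b * α = c := by nlinarith
  have hαnn : 0 ≤ α := by
    have h1 : b ≤ Real.sqrt (b ^ 2 + 4 * c) := by
      calc b = Real.sqrt (b ^ 2) := (Real.sqrt_sq hbpos.le).symm
        _ ≤ _ := Real.sqrt_le_sqrt (by nlinarith)
    rw [hs] at h1; linarith
  have hαpos : 0 < α := by
    rcases hαnn.lt_or_eq with h | h
    · exact h
    · exfalso; rw [← h] at hq; simp at hq; linarith
  have hrne : r ≠ 0 := hr0.ne'
  -- derivatives
  have h1 : deriv (fun s : ℝ => s ^ α) r = α * r ^ (α - 1) :=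
    Real.deriv_rpow_const r α
  have hEq : deriv (fun s : ℝ => s ^ α) =ᶠ[nhds r] (fun s => α * s ^ (α - 1)) := by
    filter_upwards [eventually_ne_nhds hrne] with s hs
    exact Real.deriv_rpow_const s α
  have h2 : deriv (deriv (fun s : ℝ => s ^ α)) r = α * ((α - 1) * r ^ (α - 1 - 1)) := by
    rw [hEq.deriv_eq, deriv_const_mul _ ((Real.differentiableAt_rpow_const_of_ne (α - 1) hrne)),
      Real.deriv_rpow_const r (α - 1)]
  -- power identities
  have hp1 : r ^ (α - 1) = r ^ (α - 2) * r := by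
    rw [show α - 1 = (α - 2) + 1 by ring, Real.rpow_add hr0, Real.rpow_one]
  have hp2 : r ^ α = r ^ (α - 2) * r ^ 2 := by
    rw [← Real.rpow_two, ← Real.rpow_add hr0]; ring_nf
  have hp3 : r ^ (m - 1) = r ^ m * r⁻¹ := by
    rw [show m - 1 = m + (-1) by ring, Real.rpow_add hr0, Real.rpow_neg_one]
  have hrm : 0 < r ^ m := Real.rpow_pos_of_pos hr0 m
  have ht : 0 < r ^ (α - 2) := Real.rpow_pos_of_pos hr0 _
  have hD : 0 < ε + lam * r ^ m := by positivity
  rw [h1, h2, show α - 1 - 1 = α - 2 by ring, hp1, hp2, hp3]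
  have hin : α * (α - 1) + c * α - c + m * α * (lam * r ^ m / (ε + lam * r ^ m))
      = m * α * (-ε / (ε + lam * r ^ m)) := by
    field_simp
    linear_combination (ε + lam * r ^ m) * hq
  have hkey : α * ((α - 1) * r ^ (α - 2))
      + (c / r + m * lam * (r ^ m * r⁻¹) / (ε + lam * r ^ m)) * (α * (r ^ (α - 2) * r))
      - c / r ^ 2 * (r ^ (α - 2) * r ^ 2)
      = r ^ (α - 2) * (m * α * (-ε / (ε + lam * r ^ m))) := by
    rw [← hin]
    field_simp
    ring
  rw [hkey]
  apply mul_neg_of_pos_of_neg ht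
  apply mul_neg_of_pos_of_neg (by positivity)
  exact div_neg_of_neg_of_pos (neg_neg_of_pos hε) hD
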